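/- Let π be a sum-indecomposable pattern of length j ≥ 3 and let w_k denote the number of π-avoiding weak ascent sequences of length k. Then w_{m+n} ≥ w_m · w_n for all m, n ≥ 1. -/

import Mathlib

open Filter Topology

/-- Number of ascents in a sequence (list) of naturals. -/
def asc (s : List ℕ) : ℕ :=
  ((s.zip s.tail).filter (fun p => p.1 < p.2)).length

/-- `s` is an ascent sequence: first entry `0`, and each later entry is at most
one more than the number of ascents of the preceding prefix. -/
def IsAscentSeq (s : List ℕ) : Prop :=
  (0 < s.length → s.getD 0 0 = 0) ∧
  ∀ i, 0 < i → i < s.length → s.getD i 0 ≤ asc (s.take i) + 1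

/-- `s` is a weak ascent sequence: every entry is at most the number of ascents. -/
def IsWeakAscentSeq (s : List ℕ) : Prop :=
  ∀ x ∈ s, x ≤ asc s

/-- `s` contains the pattern `p`: some subsequence of `s` is order-isomorphic
(including equalities) to `p`. -/
def ContainsPattern (s p : List ℕ) : Prop :=
  ∃ idx : Fin p.length → ℕ, StrictMono idx ∧ (∀ a, idx a < s.length) ∧
    ∀ a b : Fin p.length, p.get a < p.get b ↔ s.getD (idx a) 0 < s.getD (idx b) 0

def AvoidsPattern (s p : List ℕ) : Prop := ¬ ContainsPattern s p

/-- A pattern of length `j` is a permutation of `0,…,j-1`. -/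
def IsPattern (p : List ℕ) : Prop := List.Perm p (List.range p.length)

/-- Sum-indecomposable: no proper prefix whose entries are all smaller than
all entries of the complementary suffix. -/
def SumIndecomposable (p : List ℕ) : Prop :=
  ¬ ∃ i, 0 < i ∧ i < p.length ∧ ∀ x ∈ p.take i, ∀ y ∈ p.drop i, x < y

/-- Number of `p`-avoiding ascent sequences of length `k`. -/
noncomputable def ascentAvoidCount (p : List ℕ) (k : ℕ) : ℕ :=
  {s : List ℕ | s.length = k ∧ IsAscentSeq s ∧ AvoidsPattern s p}.ncard

/-- Number of `p`-avoiding weak ascent sequences of length `k`. -/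
noncomputable def weakAvoidCount (p : List ℕ) (k : ℕ) : ℕ :=
  {s : List ℕ | s.length = k ∧ IsWeakAscentSeq s ∧ AvoidsPattern s p}.ncard

def listMax (s : List ℕ) : ℕ := s.foldr max 0
def listMin (s : List ℕ) : ℕ := s.foldr min (listMax s)

/-- Reverse-complement map: `m j = max + min - n (k+1-j)`. -/
def revComp (s : List ℕ) : List ℕ :=
  s.reverse.map (fun x => listMax s + listMin s - x)

/-- Occurrence of pattern 000: three equal entries. -/
def Contains000 (s : List ℕ) : Prop :=
  ∃ a b c, a < b ∧ b < c ∧ c < s.length ∧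
    s.getD a 0 = s.getD b 0 ∧ s.getD b 0 = s.getD c 0

/-- Occurrence of pattern 100: `n i₁ > n i₂ = n i₃`. -/
def Contains100 (s : List ℕ) : Prop :=
  ∃ a b c, a < b ∧ b < c ∧ c < s.length ∧
    s.getD b 0 < s.getD a 0 ∧ s.getD b 0 = s.getD c 0

/-- Occurrence of pattern 110: `n i₁ = n i₂ > n i₃`. -/
def Contains110 (s : List ℕ) : Prop :=
  ∃ a b c, a < b ∧ b < c ∧ c < s.length ∧
    s.getD a 0 = s.getD b 0 ∧ s.getD c 0 < s.getD b 0

/-- Occurrence of pattern 120: `n i₂ > n i₁ > n i₃`. -/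
def Contains120 (s : List ℕ) : Prop :=
  ∃ a b c, a < b ∧ b < c ∧ c < s.length ∧
    s.getD a 0 < s.getD b 0 ∧ s.getD c 0 < s.getD a 0

/-- Occurrence of pattern 201: `n i₁ > n i₃ > n i₂`. -/
def Contains201 (s : List ℕ) : Prop :=
  ∃ a b c, a < b ∧ b < c ∧ c < s.length ∧
    s.getD c 0 < s.getD a 0 ∧ s.getD b 0 < s.getD c 0

/-- Occurrence of pattern 012: `n i₁ < n i₂ < n i₃`. -/
def Contains012 (s : List ℕ) : Prop :=
  ∃ a b c, a < b ∧ b < c ∧ c < s.length ∧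
    s.getD a 0 < s.getD b 0 ∧ s.getD b 0 < s.getD c 0

/-- Occurrence of pattern 011: `n i₁ < n i₂ = n i₃`. -/
def Contains011 (s : List ℕ) : Prop :=
  ∃ a b c, a < b ∧ b < c ∧ c < s.length ∧
    s.getD a 0 < s.getD b 0 ∧ s.getD b 0 = s.getD c 0

/-- Occurrence of pattern 021: `n i₁ < n i₃ < n i₂`. -/
def Contains021 (s : List ℕ) : Prop :=
  ∃ a b c, a < b ∧ b < c ∧ c < s.length ∧
    s.getD a 0 < s.getD c 0 ∧ s.getD c 0 < s.getD b 0

/-- Occurrence of pattern 102: `n i₂ < n i₁ < n i₃`. -/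
def Contains102 (s : List ℕ) : Prop :=
  ∃ a b c, a < b ∧ b < c ∧ c < s.length ∧
    s.getD b 0 < s.getD a 0 ∧ s.getD a 0 < s.getD c 0

/-- The construction `C = 0101⋯01 W̃₁⋯W̃ₖ` from weak ascent sequences. -/
def buildC (k : ℕ) (W : Fin k → List ℕ) : List ℕ :=
  (List.replicate k ([0,1] : List ℕ)).flatten ++
    (List.ofFn (fun h : Fin k =>
      (W h).map (fun x =>
        x + 1 + ∑ j ∈ Finset.univ.filter (fun j => j < h), listMax (W j)))).flatten


/-! ### Auxiliary lemmas -/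

lemma asc_cons_cons (a b : ℕ) (t : List ℕ) :
    asc (a :: b :: t) = (if a < b then 1 else 0) + asc (b :: t) := by
  have h1 : (a :: b :: t).zip (a :: b :: t).tail = (a, b) :: ((b :: t).zip (b :: t).tail) := rfl
  unfold asc
  rw [h1, List.filter_cons]
  by_cases h : a < b <;> simp [h, Nat.add_comm]

lemma asc_le_length (s : List ℕ) : asc s ≤ s.length := by
  refine le_trans (List.length_filter_le _ _) ?_
  rw [List.length_zip]
  exact le_trans (min_le_left _ _) le_rfl

lemma asc_map_add (c : ℕ) : ∀ l : List ℕ, asc (l.map (· + c)) = asc l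
  | [] => rfl
  | [_] => rfl
  | a :: b :: t => by
    have h1 : (a :: b :: t).map (· + c) = (a + c) :: (b + c) :: t.map (· + c) := rfl
    have h2 : (b :: t).map (· + c) = (b + c) :: t.map (· + c) := rfl
    rw [h1, asc_cons_cons, asc_cons_cons, ← h2, asc_map_add c (b :: t)]
    congr 1
    simp

lemma asc_append_ge : ∀ (A B : List ℕ), A ≠ [] → B ≠ [] →
    A.getLastD 0 < B.headI → asc A + asc B + 1 ≤ asc (A ++ B)
  | [], _, hA, _, _ => absurd rfl hA
  | [a], B, _, hB, h => by
    cases B with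
    | nil => exact absurd rfl hB
    | cons b B' =>
      have h' : a < b := by simpa using h
      have e1 : ([a] ++ b :: B') = a :: b :: B' := rfl
      have e2 : asc [a] = 0 := rfl
      rw [e1, asc_cons_cons, if_pos h', e2]
      omega
  | a :: a' :: A', B, _, hB, h => by
    have h' : (a' :: A').getLastD 0 < B.headI := by
      simpa using h
    have ih := asc_append_ge (a' :: A') B (by simp) hB h'
    rw [List.cons_append, List.cons_append, asc_cons_cons, asc_cons_cons,
      ← List.cons_append]
    omega

lemma listMax_cons (a : ℕ) (t : List ℕ) : listMax (a :: t) = max a (listMax t) := rfl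

lemma le_listMax {x : ℕ} : ∀ {s : List ℕ}, x ∈ s → x ≤ listMax s := by
  intro s hs
  induction s with
  | nil => simp at hs
  | cons a t ih =>
    rw [listMax_cons]
    rcases List.mem_cons.mp hs with rfl | h
    · exact le_max_left _ _
    · exact le_trans (ih h) (le_max_right _ _)

lemma listMax_le {c : ℕ} : ∀ {s : List ℕ}, (∀ x ∈ s, x ≤ c) → listMax s ≤ c := by
  intro s hs
  induction s with
  | nil => exact Nat.zero_le c
  | cons a t ih =>
    rw [listMax_cons]
    exact max_le (hs a (by simp)) (ih fun x hx => hs x (by simp [hx]))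

lemma getD_append_lt (A B : List ℕ) (i : ℕ) (h : i < A.length) :
    (A ++ B).getD i 0 = A.getD i 0 := by
  rw [List.getD_eq_getElem _ _ (by simp; omega), List.getD_eq_getElem _ _ h,
    List.getElem_append_left]

lemma getD_append_ge (A B : List ℕ) (i : ℕ) (h : A.length ≤ i)
    (h2 : i < A.length + B.length) :
    (A ++ B).getD i 0 = B.getD (i - A.length) 0 := by
  rw [List.getD_eq_getElem _ _ (by simp; omega), List.getD_eq_getElem _ _ (by omega),
    List.getElem_append_right h]

lemma getD_map_add (B : List ℕ) (c i : ℕ) (h : i < B.length) :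
    (B.map (· + c)).getD i 0 = B.getD i 0 + c := by
  rw [List.getD_eq_getElem _ _ (by simpa), List.getD_eq_getElem _ _ h, List.getElem_map]

/-- The set counted by `weakAvoidCount`. -/
def Sset (p : List ℕ) (k : ℕ) : Set (List ℕ) :=
  {s : List ℕ | s.length = k ∧ IsWeakAscentSeq s ∧ AvoidsPattern s p}

lemma Sset_finite (p : List ℕ) (k : ℕ) : (Sset p k).Finite := by
  have h1 : {l : List (Fin (k + 1)) | l.length = k}.Finite := List.finite_length_eq _ k
  apply Set.Finite.subset (h1.image (fun l => l.map Fin.val))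
  rintro s ⟨hlen, hw, -⟩
  have hbound : ∀ x ∈ s, x < k + 1 := fun x hx => by
    have h2 := hw x hx
    have h3 := asc_le_length s
    omega
  refine ⟨s.attach.map (fun x => (⟨x.1, hbound x.1 x.2⟩ : Fin (k + 1))), by simp [hlen], ?_⟩
  show List.map Fin.val (s.attach.map _) = s
  rw [List.map_map]
  exact congrArg (List.map · s.attach) rfl |>.trans (by
    simpa using List.attach_map_val s (fun x => x))

lemma ncard_prod_sets (s t : Set (List ℕ)) : (s ×ˢ t).ncard = s.ncard * t.ncard := by
  rw [← Nat.card_coe_set_eq, ← Nat.card_coe_set_eq, ← Nat.card_coe_set_eq,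
    Nat.card_congr (Equiv.Set.prod s t), Nat.card_prod]

lemma F_mem (p : List ℕ) (hnd : p.Nodup) (hsi : SumIndecomposable p)
    (m n : ℕ) (hm : 1 ≤ m) (hn : 1 ≤ n)
    (A B : List ℕ) (hA : A ∈ Sset p m) (hB : B ∈ Sset p n) :
    A ++ B.map (· + (listMax A + 1)) ∈ Sset p (m + n) := by
  obtain ⟨hAl, hAw, hAav⟩ := hA
  obtain ⟨hBl, hBw, hBav⟩ := hB
  set c : ℕ := listMax A + 1 with hc
  set C : List ℕ := A ++ B.map (· + c) with hC
  have hAne : A ≠ [] := by intro h; rw [h] at hAl; simp at hAl; omega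
  have hBne : B ≠ [] := by intro h; rw [h] at hBl; simp at hBl; omega
  have hmaxA : listMax A ≤ asc A := listMax_le hAw
  have hmaxB : ∀ b ∈ B, b ≤ asc B := hBw
  have hjunct : A.getLastD 0 < (B.map (· + c)).headI := by
    have h1 : A.getLastD 0 ∈ A := by
      cases A with
      | nil => exact absurd rfl hAne
      | cons a t => rw [List.getLastD_eq_getLast?, List.getLast?_eq_getLast (List.cons_ne_nil a t)]
                    simp [List.getLast_mem]
    have h2 : A.getLastD 0 ≤ listMax A := le_listMax h1
    cases B with
    | nil => exact absurd rfl hBne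
    | cons b B' =>
      rw [List.map_cons]
      show A.getLastD 0 < b + c
      omega
  have hascC : asc A + asc B + 1 ≤ asc C := by
    have := asc_append_ge A (B.map (· + c)) hAne (by simp [hBne]) hjunct
    rwa [asc_map_add] at this
  have hClen : C.length = m + n := by simp [hC, hAl, hBl]
  refine ⟨hClen, ?_, ?_⟩
  · -- weak ascent sequence
    intro x hx
    rcases List.mem_append.mp hx with h | h
    · exact le_trans (hAw x h) (by omega)
    · obtain ⟨b, hb, rfl⟩ := List.mem_map.mp h
      have := hBw b hb
      omega
  · -- avoids the pattern
    rintro ⟨idx, hmono, hlt, hiso⟩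
    have hltmn : ∀ a, idx a < m + n := fun a => hClen ▸ hlt a
    have hvalA : ∀ i, i < m → C.getD i 0 = A.getD i 0 := fun i hi =>
      getD_append_lt A _ i (by omega)
    have hvalB : ∀ i, m ≤ i → i < m + n → C.getD i 0 = B.getD (i - m) 0 + c := by
      intro i h1 h2
      rw [hC, getD_append_ge _ _ i (by omega) (by simp [hAl, hBl]; omega), hAl,
        getD_map_add _ _ _ (by omega)]
    have hsmall : ∀ i, i < m → C.getD i 0 ≤ listMax A := by
      intro i hi
      rw [hvalA i hi, List.getD_eq_getElem _ _ (by omega)]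
      exact le_listMax (List.getElem_mem _)
    have hbig : ∀ i, m ≤ i → i < m + n → listMax A < C.getD i 0 := by
      intro i h1 h2
      rw [hvalB i h1 h2]
      omega
    by_cases hall : ∀ a, idx a < m
    · exact hAav ⟨idx, hmono, fun a => hAl ▸ hall a, fun a b => by
        rw [hiso a b, hvalA _ (hall a), hvalA _ (hall b)]⟩
    · push_neg at hall
      obtain ⟨a0, ha0⟩ := hall
      by_cases hall2 : ∀ a, m ≤ idx a
      · refine hBav ⟨fun a => idx a - m, ?_, ?_, ?_⟩
        · intro a b hab
          show idx a - m < idx b - m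
          have h1 := hmono hab
          have h2 := hall2 a
          omega
        · intro a
          show idx a - m < B.length
          have := hltmn a
          omega
        · intro a b
          show p.get a < p.get b ↔ B.getD (idx a - m) 0 < B.getD (idx b - m) 0
          rw [hiso a b, hvalB _ (hall2 a) (hltmn a), hvalB _ (hall2 b) (hltmn b)]
          omega
      · push_neg at hall2
        obtain ⟨b0, hb0⟩ := hall2
        set T : Finset (Fin p.length) := Finset.univ.filter (fun a => idx a < m) with hT
        set i : ℕ := T.card with hi
        have hiff : ∀ a : Fin p.length, a.val < i ↔ idx a < m := by
          intro a
          constructor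
          · intro hai
            by_contra hma
            push_neg at hma
            have hsub : T ⊆ Finset.Iio a := by
              intro b hb
              rw [hT, Finset.mem_filter] at hb
              rw [Finset.mem_Iio]
              by_contra hba
              push_neg at hba
              have := hmono.monotone hba
              omega
            have hcard := Finset.card_le_card hsub
            rw [Fin.card_Iio] at hcard
            omega
          · intro ham
            have hsub : Finset.Iic a ⊆ T := by
              intro b hb
              rw [Finset.mem_Iic] at hb
              rw [hT, Finset.mem_filter]
              have := hmono.monotone hb
              exact ⟨Finset.mem_univ _, by omega⟩
            have hcard := Finset.card_le_card hsub
            rw [Fin.card_Iic] at hcard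
            omega
        have hipos : 0 < i := by
          have := (hiff b0).mpr hb0
          omega
        have hilt : i < p.length := by
          by_contra hge
          push_neg at hge
          have : (a0 : ℕ) < i := lt_of_lt_of_le a0.isLt hge
          have := (hiff a0).mp this
          omega
        refine hsi ⟨i, hipos, hilt, ?_⟩
        intro x hx y hy
        obtain ⟨u, hu, hxu⟩ := List.mem_iff_getElem.mp hx
        obtain ⟨v, hv, hyv⟩ := List.mem_iff_getElem.mp hy
        rw [List.length_take] at hu
        rw [List.length_drop] at hv
        have hu2 : u < p.length := by omega
        have hv2 : i + v < p.length := by omega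
        rw [List.getElem_take] at hxu
        rw [List.getElem_drop] at hyv
        set a : Fin p.length := ⟨u, hu2⟩ with ha
        set b : Fin p.length := ⟨i + v, hv2⟩ with hb
        have hua : idx a < m := (hiff a).mp (by simp [ha]; omega)
        have hvb : m ≤ idx b := by
          by_contra hmb
          push_neg at hmb
          have := (hiff b).mpr hmb
          simp [hb] at this
        have hcv : C.getD (idx a) 0 < C.getD (idx b) 0 :=
          lt_of_le_of_lt (hsmall _ hua) (hbig _ hvb (hltmn b))
        have hne : a ≠ b := by
          intro h
          rw [ha, hb, Fin.mk_eq_mk] at h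
          omega
        have hpab : p.get a < p.get b := by
          rcases lt_trichotomy (p.get a) (p.get b) with h | h | h
          · exact h
          · exact absurd ((List.Nodup.get_inj_iff hnd).mp h) hne
          · exact absurd ((hiso b a).mp h) (by omega)
        rw [← hxu, ← hyv]
        simpa [List.get_eq_getElem, ha, hb] using hpab

/-- Supermultiplicativity of the counts of π-avoiding weak ascent sequences. -/
theorem stmt2 (p : List ℕ) (hp : IsPattern p) (hp3 : 3 ≤ p.length)
    (hsi : SumIndecomposable p) (m n : ℕ) (hm : 1 ≤ m) (hn : 1 ≤ n) :
    weakAvoidCount p m * weakAvoidCount p n ≤ weakAvoidCount p (m + n) := by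
  classical
  have hnd : p.Nodup := hp.nodup_iff.mpr List.nodup_range
  set F : List ℕ × List ℕ → List ℕ :=
    fun q => q.1 ++ q.2.map (· + (listMax q.1 + 1)) with hF
  have hmaps : ∀ q ∈ (Sset p m) ×ˢ (Sset p n), F q ∈ Sset p (m + n) := by
    rintro ⟨A, B⟩ ⟨hA, hB⟩
    exact F_mem p hnd hsi m n hm hn A B hA hB
  have hinj : Set.InjOn F ((Sset p m) ×ˢ (Sset p n)) := by
    rintro ⟨A, B⟩ ⟨hA, hB⟩ ⟨A', B'⟩ ⟨hA', hB'⟩ h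
    simp only [hF] at h
    have hAl : A.length = m := hA.1
    have hA'l : A'.length = m := hA'.1
    have hAeq : A = A' := by
      have h1 := congrArg (List.take m) h
      rwa [List.take_left' hAl, List.take_left' hA'l] at h1
    subst hAeq
    have h2 : B.map (· + (listMax A + 1)) = B'.map (· + (listMax A + 1)) :=
      List.append_cancel_left h
    have hBeq : B = B' :=
      List.map_injective_iff.mpr (fun x y hxy => by omega) h2
    rw [hBeq]
  have hwc : ∀ k, weakAvoidCount p k = (Sset p k).ncard := fun k => rfl
  calc weakAvoidCount p m * weakAvoidCount p n
      = ((Sset p m) ×ˢ (Sset p n)).ncard := by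
        rw [hwc, hwc, ncard_prod_sets]
    _ = (F '' ((Sset p m) ×ˢ (Sset p n))).ncard :=
        (Set.ncard_image_of_injOn hinj).symm
    _ ≤ (Sset p (m + n)).ncard :=
        Set.ncard_le_ncard (Set.image_subset_iff.mpr hmaps) (Sset_finite p (m + n))
    _ = weakAvoidCount p (m + n) := rfl
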